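/- In the field ℝℝ of Puiseux series over ℝ, let S_K = 1/2 + Σ_{k=1}^{K} T^{k+1/k} for K ∈ ℕ. The set {ζ ∈ ℝℝ : ζ > S_K for all K ∈ ℕ} is nonempty (it contains 1) and has no least element: for every ζ ∈ ℝℝ with ζ > S_K for all K, there exists ξ ∈ ℝℝ with ξ < ζ and ξ > S_K for all K. In particular, the cut κ determined by the S_K is realized by no element of ℝℝ: for every ζ ∈ ℝℝ, either ζ < S_K for some K, or ζ > S_K for all K. -/

import Mathlib

/-! ### The field `ℝℝ` of Puiseux series over `ℝ` -/

/-- The Hahn series field with real coefficients and value group `ℚ`. -/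
abbrev HS : Type := HahnSeries ℚ ℝ

/-- A Hahn series is a Puiseux series when its support is contained in `(1/d)ℤ`
for some positive integer `d`. -/
def IsPuiseux (x : HS) : Prop :=
  ∃ d : ℕ, 0 < d ∧ ∀ q ∈ x.support, ∃ n : ℤ, q = (n : ℚ) / (d : ℚ)

theorem isPuiseux_inv {x : HS} (hx : IsPuiseux x) : IsPuiseux x⁻¹ := by
  rcases eq_or_ne x 0 with rfl | hx0
  · rw [inv_zero]; exact ⟨1, one_pos, by simp⟩
  obtain ⟨d, hd, h⟩ := hx
  have hd0 : (d : ℚ) ≠ 0 := Nat.cast_ne_zero.mpr hd.ne'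
  have hDadd : ∀ p q : ℚ, (∃ n : ℤ, p = (n : ℚ) / d) → (∃ n : ℤ, q = (n : ℚ) / d) →
      ∃ n : ℤ, p + q = (n : ℚ) / d := by
    rintro p q ⟨n, rfl⟩ ⟨m, rfl⟩
    exact ⟨n + m, by push_cast; field_simp⟩
  have horder : ∃ n : ℤ, x.order = (n : ℚ) / d := by
    refine h _ ?_
    rw [HahnSeries.order_of_ne hx0]
    exact (x.isWF_support).min_mem _
  have hlc : (x.leadingCoeff)⁻¹ * x.leadingCoeff = 1 :=
    inv_mul_cancel₀ (HahnSeries.leadingCoeff_ne_zero.mpr hx0)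
  have hwo : 0 < (1 - HahnSeries.single (-x.order) (x.leadingCoeff)⁻¹ * x).orderTop :=
    HahnSeries.unit_aux x hlc (-x.order) (neg_add_cancel _)
  have hsupp_single : ∀ (r : ℝ) (q : ℚ),
      q ∈ (HahnSeries.single (-x.order) r * x).support → ∃ n : ℤ, q = (n : ℚ) / d := by
    intro r q hq
    obtain ⟨i, hi, j, hj, rfl⟩ := HahnSeries.support_mul_subset hq
    have hi' : i = -x.order := HahnSeries.support_single_subset hi
    obtain ⟨n, hn⟩ := horder
    obtain ⟨m, hm⟩ := h j hj
    exact hDadd i j ⟨-n, by rw [hi', hn]; push_cast; ring⟩ ⟨m, hm⟩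
  have hsupp_w : ∀ q ∈ (1 - HahnSeries.single (-x.order) (x.leadingCoeff)⁻¹ * x).support,
      ∃ n : ℤ, q = (n : ℚ) / d := by
    intro q hq
    rw [sub_eq_add_neg] at hq
    rcases HahnSeries.support_add_subset _ _ hq with h1 | h2
    · rw [HahnSeries.support_one] at h1
      exact ⟨0, by simp_all⟩
    · rw [HahnSeries.support_neg] at h2
      exact hsupp_single _ q h2
  have hpow : ∀ (m : ℕ) (q : ℚ),
      q ∈ ((1 - HahnSeries.single (-x.order) (x.leadingCoeff)⁻¹ * x) ^ m).support →
      ∃ n : ℤ, q = (n : ℚ) / d := by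
    intro m
    induction m with
    | zero =>
      intro q hq
      rw [pow_zero, HahnSeries.support_one] at hq
      exact ⟨0, by simp_all⟩
    | succ m ih =>
      intro q hq
      rw [pow_succ] at hq
      obtain ⟨i, hi, j, hj, rfl⟩ := HahnSeries.support_mul_subset hq
      exact hDadd i j (ih i hi) (hsupp_w j hj)
  have hsum_supp : ∀ q ∈ (HahnSeries.SummableFamily.powers (1 - HahnSeries.single (-x.order) (x.leadingCoeff)⁻¹ * x)).hsum.support,
      ∃ n : ℤ, q = (n : ℚ) / d := by
    intro q hq
    obtain ⟨s, hs⟩ := Set.mem_iUnion.mp (HahnSeries.SummableFamily.support_hsum_subset hq)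
    rw [HahnSeries.SummableFamily.powers_of_orderTop_pos hwo] at hs
    exact hpow s q hs
  have hy : ((HahnSeries.SummableFamily.powers (1 - HahnSeries.single (-x.order) (x.leadingCoeff)⁻¹ * x)).hsum *
      HahnSeries.single (-x.order) (x.leadingCoeff)⁻¹) * x = 1 := by
    have h1 := HahnSeries.SummableFamily.one_sub_self_mul_hsum_powers hwo
    calc ((HahnSeries.SummableFamily.powers (1 - HahnSeries.single (-x.order) (x.leadingCoeff)⁻¹ * x)).hsum *
          HahnSeries.single (-x.order) (x.leadingCoeff)⁻¹) * x
        = (1 - (1 - HahnSeries.single (-x.order) (x.leadingCoeff)⁻¹ * x)) *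
            (HahnSeries.SummableFamily.powers (1 - HahnSeries.single (-x.order) (x.leadingCoeff)⁻¹ * x)).hsum := by ring
      _ = 1 := h1
  have hxinv : x⁻¹ = (HahnSeries.SummableFamily.powers (1 - HahnSeries.single (-x.order) (x.leadingCoeff)⁻¹ * x)).hsum *
      HahnSeries.single (-x.order) (x.leadingCoeff)⁻¹ :=
    (eq_inv_of_mul_eq_one_left hy).symm
  rw [hxinv]
  refine ⟨d, hd, fun q hq => ?_⟩
  obtain ⟨i, hi, j, hj, rfl⟩ := HahnSeries.support_mul_subset hq
  have hj' : j = -x.order := HahnSeries.support_single_subset hj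
  obtain ⟨n, hn⟩ := horder
  exact hDadd i j (hsum_supp i hi) ⟨-n, by rw [hj', hn]; push_cast; ring⟩

/-- The field `ℝℝ` of Puiseux series over `ℝ`, as a subfield of the Hahn series field. -/
noncomputable def puiseuxSubfield : Subfield HS where
  carrier := {x | IsPuiseux x}
  zero_mem' := ⟨1, one_pos, by simp⟩
  one_mem' := by
    refine ⟨1, one_pos, fun q hq => ⟨0, ?_⟩⟩
    rw [HahnSeries.support_one] at hq
    simp_all
  add_mem' := by
    rintro x y ⟨d, hd, h⟩ ⟨e, he, k⟩
    have hd0 : (d : ℚ) ≠ 0 := Nat.cast_ne_zero.mpr hd.ne'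
    have he0 : (e : ℚ) ≠ 0 := Nat.cast_ne_zero.mpr he.ne'
    refine ⟨d * e, Nat.mul_pos hd he, fun q hq => ?_⟩
    rcases HahnSeries.support_add_subset _ _ hq with hq' | hq'
    · obtain ⟨n, hn⟩ := h q hq'
      refine ⟨n * e, ?_⟩
      rw [hn]; push_cast; field_simp
    · obtain ⟨n, hn⟩ := k q hq'
      refine ⟨n * d, ?_⟩
      rw [hn]; push_cast; field_simp
  neg_mem' := by
    rintro x ⟨d, hd, h⟩
    exact ⟨d, hd, fun q hq => h q (by rwa [HahnSeries.support_neg] at hq)⟩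
  mul_mem' := by
    rintro x y ⟨d, hd, h⟩ ⟨e, he, k⟩
    have hd0 : (d : ℚ) ≠ 0 := Nat.cast_ne_zero.mpr hd.ne'
    have he0 : (e : ℚ) ≠ 0 := Nat.cast_ne_zero.mpr he.ne'
    refine ⟨d * e, Nat.mul_pos hd he, fun q hq => ?_⟩
    obtain ⟨i, hi, j, hj, rfl⟩ := HahnSeries.support_mul_subset hq
    obtain ⟨n, hn⟩ := h i hi
    obtain ⟨m, hm⟩ := k j hj
    refine ⟨n * e + m * d, ?_⟩
    rw [hn, hm]; push_cast; field_simp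
  inv_mem' := fun x hx => isPuiseux_inv hx

/-- The field `ℝℝ` of Puiseux series over `ℝ`. -/
abbrev RR : Type := ↥puiseuxSubfield

theorem lc_eq_coeff_order {x : HS} (hx : x ≠ 0) : x.leadingCoeff = x.coeff x.order := by
  exact HahnSeries.leadingCoeff_eq

theorem lc_add_pos {a b : HS} (ha : 0 < a.leadingCoeff) (hb : 0 < b.leadingCoeff) :
    0 < (a + b).leadingCoeff := by
  have ha0 : a ≠ 0 := HahnSeries.leadingCoeff_ne_zero.mp ha.ne'
  have hb0 : b ≠ 0 := HahnSeries.leadingCoeff_ne_zero.mp hb.ne'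
  have key : ∀ c d : HS, c ≠ 0 → d ≠ 0 → 0 < c.leadingCoeff → 0 < d.leadingCoeff →
      c.order ≤ d.order → 0 < (c + d).leadingCoeff := by
    intro c d hc0 hd0 hc hd hcd
    rcases lt_or_eq_of_le hcd with hlt | heq
    · have hdc : d.coeff c.order = 0 := HahnSeries.coeff_eq_zero_of_lt_order hlt
      have hco : (c + d).coeff c.order = c.leadingCoeff := by
        rw [HahnSeries.coeff_add, hdc, add_zero, lc_eq_coeff_order hc0]
      have hne : (c + d).coeff c.order ≠ 0 := by rw [hco]; exact hc.ne'
      have hcd0 : c + d ≠ 0 := fun h => hne (by simp [h])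
      have h1 : (c + d).order ≤ c.order := HahnSeries.order_le_of_coeff_ne_zero hne
      have h2 : min c.order d.order ≤ (c + d).order := HahnSeries.min_order_le_order_add hcd0
      rw [min_eq_left hlt.le] at h2
      have h3 : (c + d).order = c.order := le_antisymm h1 h2
      rw [lc_eq_coeff_order hcd0, h3, hco]; exact hc
    · have hco : (c + d).coeff c.order = c.leadingCoeff + d.leadingCoeff := by
        rw [HahnSeries.coeff_add, lc_eq_coeff_order hc0, lc_eq_coeff_order hd0, heq]
      have hpos : (0:ℝ) < c.leadingCoeff + d.leadingCoeff := by linarith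
      have hne : (c + d).coeff c.order ≠ 0 := by rw [hco]; exact hpos.ne'
      have hcd0 : c + d ≠ 0 := fun h => hne (by simp [h])
      have h1 : (c + d).order ≤ c.order := HahnSeries.order_le_of_coeff_ne_zero hne
      have h2 : min c.order d.order ≤ (c + d).order := HahnSeries.min_order_le_order_add hcd0
      rw [← heq, min_self] at h2
      have h3 : (c + d).order = c.order := le_antisymm h1 h2
      rw [lc_eq_coeff_order hcd0, h3, hco]; exact hpos
  rcases le_total a.order b.order with h | h
  · exact key a b ha0 hb0 ha hb h
  · rw [add_comm]; exact key b a hb0 ha0 hb ha h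

theorem leadingCoeff_neg' (z : HS) : (-z).leadingCoeff = -z.leadingCoeff := by
  rcases eq_or_ne z 0 with rfl | hz
  · simp
  · have hz' : (-z) ≠ 0 := neg_ne_zero.mpr hz
    exact HahnSeries.leadingCoeff_neg

/-- The linear order on Puiseux series: a nonzero series is positive if and only if its
leading coefficient (the coefficient of its lowest-exponent term) is positive. -/
noncomputable instance : LinearOrder RR where
  lt x y := 0 < ((y : HS) - (x : HS)).leadingCoeff
  le x y := x = y ∨ 0 < ((y : HS) - (x : HS)).leadingCoeff
  le_refl x := Or.inl rfl
  le_trans := by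
    rintro x y z (rfl | h1) h2
    · exact h2
    · rcases h2 with rfl | h2
      · exact Or.inr h1
      · refine Or.inr ?_
        have e : (z : HS) - (x : HS) = ((y : HS) - (x : HS)) + ((z : HS) - (y : HS)) := by
          ring
        rw [e]
        exact lc_add_pos h1 h2
  le_antisymm := by
    rintro x y (rfl | h1) h2
    · rfl
    · rcases h2 with rfl | h2
      · rfl
      · exfalso
        have e : (x : HS) - (y : HS) = -((y : HS) - (x : HS)) := by ring
        rw [e, leadingCoeff_neg'] at h2
        linarith
  le_total := by
    intro x y
    rcases eq_or_ne x y with rfl | hxy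
    · exact Or.inl (Or.inl rfl)
    · have hne : (y : HS) - (x : HS) ≠ 0 :=
        sub_ne_zero.mpr fun h => hxy (Subtype.coe_injective h.symm)
      have h := HahnSeries.leadingCoeff_ne_zero.mpr hne
      rcases lt_or_gt_of_ne h with h' | h'
      · refine Or.inr (Or.inr ?_)
        have e : (x : HS) - (y : HS) = -((y : HS) - (x : HS)) := by ring
        rw [e, leadingCoeff_neg']
        linarith
      · exact Or.inl (Or.inr h')
  lt_iff_le_not_ge := by
    intro x y
    constructor
    · intro h
      change 0 < ((y : HS) - (x : HS)).leadingCoeff at h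
      refine ⟨Or.inr h, ?_⟩
      rintro (rfl | h')
      · simp at h
      · have e : (x : HS) - (y : HS) = -((y : HS) - (x : HS)) := by ring
        rw [e, leadingCoeff_neg'] at h'
        linarith
    · rintro ⟨rfl | h, hn⟩
      · exact absurd (Or.inl rfl) hn
      · exact h
  toDecidableLE := Classical.decRel _

/-- `ℝℝ` is an ordered field extension of `ℝ`. -/
noncomputable instance : IsStrictOrderedRing RR :=
  haveI : IsOrderedAddMonoid RR :=
    { add_le_add_left := by
        rintro x y (rfl | h) c
        · exact Or.inl rfl
        · refine Or.inr ?_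
          convert h using 2
          push_cast; ring }
  haveI : ZeroLEOneClass RR :=
    { zero_le_one := by
        refine Or.inr ?_
        have e : ((1 : RR) : HS) - ((0 : RR) : HS) = (1 : HS) := by push_cast; ring
        rw [e, HahnSeries.leadingCoeff_one]; norm_num }
  IsStrictOrderedRing.of_mul_pos (by
      intro x y hx hy
      change 0 < ((x : HS) - ((0 : RR) : HS)).leadingCoeff at hx
      change 0 < ((y : HS) - ((0 : RR) : HS)).leadingCoeff at hy
      change 0 < (((x * y : RR) : HS) - ((0 : RR) : HS)).leadingCoeff
      have e : ∀ a : RR, (a : HS) - ((0 : RR) : HS) = (a : HS) := fun a => by push_cast; ring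
      rw [e] at hx hy ⊢
      have hx0 : (x : HS) ≠ 0 := HahnSeries.leadingCoeff_ne_zero.mp hx.ne'
      have hy0 : (y : HS) ≠ 0 := HahnSeries.leadingCoeff_ne_zero.mp hy.ne'
      have hcoe : ((x * y : RR) : HS) = (x : HS) * (y : HS) := by push_cast; ring
      have hxy : (x : HS) * (y : HS) ≠ 0 := mul_ne_zero hx0 hy0
      rw [hcoe]
      have h1 : ((x : HS) * (y : HS)).order = (x : HS).order + (y : HS).order :=
        HahnSeries.order_mul_of_ne_zero
          (mul_ne_zero (HahnSeries.leadingCoeff_ne_zero.mpr hx0)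
            (HahnSeries.leadingCoeff_ne_zero.mpr hy0))
      have h2 := HahnSeries.coeff_mul_order_add_order (x : HS) (y : HS)
      have h3 : ((x : HS) * (y : HS)).leadingCoeff
          = ((x : HS) * (y : HS)).coeff (((x : HS) * (y : HS)).order) :=
        lc_eq_coeff_order hxy
      rw [h3, h1, h2]
      positivity)

/-- The indeterminate `T`, a positive infinitesimal of `ℝℝ`. -/
noncomputable def TT : RR :=
  ⟨HahnSeries.single (1 : ℚ) (1 : ℝ), 1, one_pos, fun q hq => ⟨1, by
    have h := HahnSeries.support_single_subset hq
    simp_all⟩⟩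

/-- The monomial `T^q` of `ℝℝ`, for `q` a rational with denominator `d`. -/
noncomputable def Tmon (q : ℚ) (d : ℕ) (hd : 0 < d) (hq : ∃ n : ℤ, q = (n : ℚ) / (d : ℚ)) :
    RR :=
  ⟨HahnSeries.single q (1 : ℝ), d, hd, fun p hp => by
    have h := HahnSeries.support_single_subset hp
    simp only [Set.mem_singleton_iff] at h
    exact h ▸ hq⟩

theorem SK_aux (k : ℕ) : ∃ n : ℤ, (k : ℚ) + 1 / (k : ℚ) = (n : ℚ) / ((max k 1 : ℕ) : ℚ) := by
  rcases Nat.eq_zero_or_pos k with hk | hk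
  · subst hk; exact ⟨0, by norm_num⟩
  · refine ⟨(k : ℤ) ^ 2 + 1, ?_⟩
    rw [Nat.max_eq_left hk]
    have hk0 : (k : ℚ) ≠ 0 := Nat.cast_ne_zero.mpr hk.ne'
    push_cast
    field_simp

/-- The partial sums `S_K = 1/2 + Σ_{k=1}^{K} T^{k+1/k}` defining the cut `κ`.
(For `k ≥ 1` the exponent `k + 1/k` has denominator `max k 1 = k`.) -/
noncomputable def SK (K : ℕ) : RR :=
  (1 / 2 : RR) + ∑ k ∈ Finset.Icc 1 K,
    Tmon ((k : ℚ) + 1 / (k : ℚ)) (max k 1) (by omega) (SK_aux k)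

/-- `ζ < κ`: `ζ` lies below the cut `κ`, i.e. below some partial sum `S_K`. -/
def ltKappa (ζ : RR) : Prop := ∃ K : ℕ, ζ < SK K

/-- `ζ > κ`: `ζ` lies above the cut `κ`, i.e. above every partial sum `S_K`. -/
def gtKappa (ζ : RR) : Prop := ∀ K : ℕ, SK K < ζ

set_option maxHeartbeats 1000000
set_option synthInstance.maxHeartbeats 400000

lemma RR_lt_iff (a b : RR) : a < b ↔ 0 < ((b:HS) - (a:HS)).leadingCoeff := Iff.rfl

lemma order_coeff_of (x : HS) (o : ℚ) (h0 : x.coeff o ≠ 0) (h : ∀ q < o, x.coeff q = 0) :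
    x.order = o ∧ x.leadingCoeff = x.coeff o := by
  have hx : x ≠ 0 := fun hx => h0 (by simp [hx])
  have h1 : x.order ≤ o := HahnSeries.order_le_of_coeff_ne_zero h0
  have h2 : x.order ∈ x.support := by
    rw [HahnSeries.order_of_ne hx]; exact x.isWF_support.min_mem _
  have h3 : ¬ x.order < o := fun hlt => h2 (h _ hlt)
  have ho : x.order = o := le_antisymm h1 (not_lt.1 h3)
  exact ⟨ho, by rw [lc_eq_coeff_order hx, ho]⟩

noncomputable def coeffHom (q : ℚ) : HS →+ ℝ where
  toFun x := x.coeff q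
  map_zero' := rfl
  map_add' _ _ := rfl

/-- The exponent `k + 1/k`. -/
def ee (k : ℕ) : ℚ := (k:ℚ) + 1/(k:ℚ)

lemma ee_pos {k : ℕ} (hk : 1 ≤ k) : 0 < ee k := by
  have h1 : (1:ℚ) ≤ k := by exact_mod_cast hk
  have h2 : 0 < 1/(k:ℚ) := one_div_pos.mpr (by linarith)
  unfold ee; linarith

lemma ee_lt {k j : ℕ} (hk : 1 ≤ k) (hkj : k < j) : ee k < ee j := by
  have h1 : (1:ℚ) ≤ k := by exact_mod_cast hk
  have h2 : (k:ℚ) + 1 ≤ j := by exact_mod_cast hkj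
  have h3 : 1/(k:ℚ) ≤ 1 := by rw [div_le_one (by linarith)]; exact h1
  have h4 : 0 < 1/(j:ℚ) := one_div_pos.mpr (by linarith)
  unfold ee; linarith

lemma SK_coe (K : ℕ) : ((SK K : RR) : HS)
    = HahnSeries.single (0:ℚ) (1/2 : ℝ) + ∑ k ∈ Finset.Icc 1 K,
      HahnSeries.single (ee k) (1:ℝ) := by
  have h1 : ((SK K : RR) : HS) = ((1/2 : RR) : HS) + ∑ k ∈ Finset.Icc 1 K,
      ((Tmon ((k : ℚ) + 1 / (k : ℚ)) (max k 1) (by omega) (SK_aux k) : RR) : HS) := by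
    rw [SK]
    rw [show ∀ a b : RR, ((a + b : RR) : HS) = (a:HS) + (b:HS) from fun _ _ => rfl]
    congr 1
    exact map_sum puiseuxSubfield.subtype _ _
  rw [h1]
  congr 1
  have h2 : ((1/2 : RR) : HS) = (1/2 : HS) := by
    rw [show ((1/2:RR):HS) = puiseuxSubfield.subtype (1/2) from rfl, map_div₀, map_one,
      map_ofNat]
  rw [h2, ← HahnSeries.C_apply, map_div₀ (HahnSeries.C : ℝ →+* HS)]
  simp [map_ofNat]

lemma sum_coeff (s : Finset ℕ) (f : ℕ → HS) (q : ℚ) :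
    (∑ k ∈ s, f k).coeff q = ∑ k ∈ s, (f k).coeff q :=
  map_sum (coeffHom q) f s

lemma SK_coeff (K : ℕ) (q : ℚ) : ((SK K : RR) : HS).coeff q =
    (if q = 0 then (1/2:ℝ) else 0)
      + ∑ k ∈ Finset.Icc 1 K, (if q = ee k then (1:ℝ) else 0) := by
  rw [SK_coe, HahnSeries.coeff_add, sum_coeff]
  congr 1
  · by_cases h : q = 0
    · rw [if_pos h, h, HahnSeries.coeff_single_same]
    · rw [if_neg h, HahnSeries.coeff_single_of_ne h]
  · refine Finset.sum_congr rfl fun k _ => ?_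
    by_cases h : q = ee k
    · rw [if_pos h, h, HahnSeries.coeff_single_same]
    · rw [if_neg h, HahnSeries.coeff_single_of_ne h]

lemma SK_coeff_eq_zero (K : ℕ) (q : ℚ) (hq0 : q ≠ 0)
    (hqe : ∀ k, 1 ≤ k → k ≤ K → q ≠ ee k) : ((SK K : RR) : HS).coeff q = 0 := by
  rw [SK_coeff, if_neg hq0, zero_add]
  refine Finset.sum_eq_zero fun k hk => ?_
  rw [Finset.mem_Icc] at hk
  rw [if_neg (hqe k hk.1 hk.2)]

lemma SK_coeff_zero (K : ℕ) : ((SK K : RR) : HS).coeff 0 = 1/2 := by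
  rw [SK_coeff, if_pos rfl]
  have h : ∑ k ∈ Finset.Icc 1 K, (if (0:ℚ) = ee k then (1:ℝ) else 0) = 0 := by
    refine Finset.sum_eq_zero fun k hk => ?_
    rw [Finset.mem_Icc] at hk
    rw [if_neg (ee_pos hk.1).ne]
  rw [h, add_zero]

lemma SK_lt_one (K : ℕ) : SK K < 1 := by
  rw [RR_lt_iff]
  have hco : (((1:RR):HS) - ((SK K : RR):HS)).coeff 0 = 1/2 := by
    rw [HahnSeries.coeff_sub, SK_coeff_zero]
    norm_num [HahnSeries.coeff_one]
  have key := order_coeff_of (((1:RR):HS) - ((SK K : RR):HS)) 0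
    (by rw [hco]; norm_num) ?_
  · rw [key.2, hco]; norm_num
  · intro q hq
    rw [HahnSeries.coeff_sub, SK_coeff_eq_zero K q hq.ne
      (fun k hk _ => (hq.trans (ee_pos hk)).ne)]
    simp [HahnSeries.coeff_one, hq.ne]

lemma SK_succ_coe (K : ℕ) : ((SK (K+1) : RR) : HS)
    = ((SK K : RR) : HS) + HahnSeries.single (ee (K+1)) 1 := by
  rw [SK_coe, SK_coe, Finset.sum_Icc_succ_top (by omega : 1 ≤ K + 1)]
  ring

lemma SK_lt_succ (K : ℕ) : SK K < SK (K+1) := by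
  rw [RR_lt_iff, SK_succ_coe]
  have h : ((SK K : RR):HS) + HahnSeries.single (ee (K+1)) 1 - ((SK K : RR):HS)
      = HahnSeries.single (ee (K+1)) 1 := by ring
  rw [h, HahnSeries.leadingCoeff_of_single]
  norm_num

lemma SK_mono : Monotone SK := monotone_nat_of_le_succ fun K => (SK_lt_succ K).le

lemma puiseux_coeff_ee (z : HS) (d : ℕ) (hd : 0 < d)
    (hsup : ∀ q ∈ z.support, ∃ n : ℤ, q = (n:ℚ)/(d:ℚ)) {j : ℕ} (hj : d < j) :
    z.coeff (ee j) = 0 := by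
  by_contra hne
  obtain ⟨n, hn⟩ := hsup _ hne
  have hj0 : (j:ℚ) ≠ 0 := Nat.cast_ne_zero.mpr (by omega)
  have hd0 : (d:ℚ) ≠ 0 := Nat.cast_ne_zero.mpr hd.ne'
  rw [ee] at hn
  have key : (n:ℚ) * j = d * j^2 + d := by
    field_simp at hn
    linear_combination -hn
  have keyZ : (n:ℤ) * j = d * j^2 + d := by exact_mod_cast key
  have hdvd : (j:ℤ) ∣ (d:ℤ) := ⟨n - d*j, by linear_combination -keyZ⟩
  have := Int.le_of_dvd (by exact_mod_cast hd) hdvd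
  omega

lemma main2 (ζ : RR) (h : ∀ K, SK K < ζ) : ∃ ξ : RR, ξ < ζ ∧ ∀ K, SK K < ξ := by
  obtain ⟨d, hd, hsup⟩ := ζ.2
  set x : ℕ → HS := fun K => (ζ:HS) - ((SK K : RR):HS) with hx
  have hlc : ∀ K, 0 < (x K).leadingCoeff := fun K => (RR_lt_iff _ _).1 (h K)
  have hxne : ∀ K, x K ≠ 0 := fun K => HahnSeries.leadingCoeff_ne_zero.mp (hlc K).ne'
  have hx_succ : ∀ K, x (K+1) = x K - HahnSeries.single (ee (K+1)) 1 := by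
    intro K; simp only [hx, SK_succ_coe]; ring
  have hnotmem : ∀ K, d ≤ K → (x K).coeff (ee (K+1)) = 0 := by
    intro K hK
    have h1 : (ζ:HS).coeff (ee (K+1)) = 0 :=
      puiseux_coeff_ee (ζ:HS) d hd hsup (by omega)
    have h2 : ((SK K : RR):HS).coeff (ee (K+1)) = 0 :=
      SK_coeff_eq_zero K _ (ee_pos (by omega)).ne'
        (fun k hk hkK => (ee_lt hk (by omega)).ne')
    simp [hx, HahnSeries.coeff_sub, h1, h2]
  set D := max d 1 with hD
  set o := (x D).order with ho
  set c := (x D).leadingCoeff with hc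
  have hco : (x D).coeff o = c := (lc_eq_coeff_order (hxne D)).symm
  have key : ∀ m, (x (D+m)).order = o ∧ (x (D+m)).coeff o = c := by
    intro m
    induction m with
    | zero => exact ⟨rfl, hco⟩
    | succ m ih =>
      set K := D + m with hK
      have hdK : d ≤ K := le_trans (le_max_left d 1) (by omega)
      have hoe : o < ee (K+1) := by
        rcases lt_trichotomy o (ee (K+1)) with h' | h' | h'
        · exact h'
        · exfalso
          have hmem : (x K).order ∈ (x K).support := by
            rw [HahnSeries.order_of_ne (hxne K)]; exact (x K).isWF_support.min_mem _
          rw [ih.1, h', HahnSeries.mem_support] at hmem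
          exact hmem (hnotmem K hdK)
        · exfalso
          have hcoeff : (x (K+1)).coeff (ee (K+1)) = -1 := by
            rw [hx_succ K, HahnSeries.coeff_sub,
              HahnSeries.coeff_eq_zero_of_lt_order (by rw [ih.1]; exact h')]
            simp [HahnSeries.coeff_single]
          have hbelow : ∀ q < ee (K+1), (x (K+1)).coeff q = 0 := by
            intro q hq
            rw [hx_succ K, HahnSeries.coeff_sub,
              HahnSeries.coeff_eq_zero_of_lt_order (by rw [ih.1]; exact hq.trans h')]
            simp [HahnSeries.coeff_single_of_ne hq.ne]
          have hoc := order_coeff_of (x (K+1)) (ee (K+1))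
            (by rw [hcoeff]; norm_num) hbelow
          have hpos := hlc (K+1)
          rw [hoc.2, hcoeff] at hpos
          norm_num at hpos
      have hcne : c ≠ 0 := by
        have := hlc D; rw [hc]; exact this.ne'
      have hcoeff : (x (K+1)).coeff o = c := by
        rw [hx_succ K, HahnSeries.coeff_sub, ih.2,
          HahnSeries.coeff_single_of_ne hoe.ne, sub_zero]
      have hbelow : ∀ q < o, (x (K+1)).coeff q = 0 := by
        intro q hq
        rw [hx_succ K, HahnSeries.coeff_sub,
          HahnSeries.coeff_eq_zero_of_lt_order (by rw [ih.1]; exact hq),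
          HahnSeries.coeff_single_of_ne (hq.trans hoe).ne, sub_zero]
      have hoc := order_coeff_of (x (K+1)) o (by rw [hcoeff]; exact hcne) hbelow
      exact ⟨hoc.1, hcoeff⟩
  obtain ⟨N, hN⟩ := exists_nat_gt o
  set ξ : RR := ζ - Tmon (N:ℚ) 1 one_pos ⟨N, by norm_num⟩ with hξ
  have hξcoe : (ξ:HS) = (ζ:HS) - HahnSeries.single ((N:ℚ)) 1 := rfl
  have hcpos : 0 < c := hlc D
  refine ⟨ξ, ?_, ?_⟩
  · rw [RR_lt_iff]
    have hdiff : (ζ:HS) - (ξ:HS) = HahnSeries.single ((N:ℚ)) 1 := by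
      rw [hξcoe]; ring
    rw [hdiff, HahnSeries.leadingCoeff_of_single]
    norm_num
  · intro K
    refine lt_of_le_of_lt (SK_mono (le_max_left K D)) ?_
    set K' := max K D with hK'
    obtain ⟨m, hm⟩ : ∃ m, K' = D + m := ⟨K' - D, by omega⟩
    rw [RR_lt_iff]
    have hdiff : (ξ:HS) - ((SK K' : RR):HS) = x K' - HahnSeries.single ((N:ℚ)) 1 := by
      rw [hξcoe, hx]; ring
    have hoN : o < (N:ℚ) := hN
    have hcoeff : ((ξ:HS) - ((SK K' : RR):HS)).coeff o = c := by
      rw [hdiff, HahnSeries.coeff_sub, hm, (key m).2,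
        HahnSeries.coeff_single_of_ne hoN.ne, sub_zero]
    have hbelow : ∀ q < o, ((ξ:HS) - ((SK K' : RR):HS)).coeff q = 0 := by
      intro q hq
      rw [hdiff, HahnSeries.coeff_sub,
        HahnSeries.coeff_eq_zero_of_lt_order (by rw [hm, (key m).1]; exact hq),
        HahnSeries.coeff_single_of_ne (hq.trans hoN).ne, sub_zero]
    have hoc := order_coeff_of _ o (by rw [hcoeff]; exact hcpos.ne') hbelow
    rw [hoc.2, hcoeff]; exact hcpos

/-- The set of elements of `ℝℝ` lying above the cut `κ` is nonempty (it contains `1`) and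
has no least element; in particular every element of `ℝℝ` lies on one side or the other of
the cut `κ`. -/
theorem statement7 :
    (∀ K : ℕ, SK K < 1) ∧
    (∀ ζ : RR, (∀ K, SK K < ζ) → ∃ ξ : RR, ξ < ζ ∧ ∀ K, SK K < ξ) ∧
    ∀ ζ : RR, (∃ K, ζ < SK K) ∨ (∀ K, SK K < ζ) := by
  refine ⟨SK_lt_one, main2, fun ζ => ?_⟩
  by_cases hc : ∃ K, ζ < SK K
  · exact Or.inl hc
  · push_neg at hc
    exact Or.inr fun K => lt_of_lt_of_le (SK_lt_succ K) (hc (K+1))
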